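/- Let ρ and A be real numbers with 1 ≤ ρ ≤ 2 and max(0.5, ρ − 1) ≤ A ≤ 3ρ − 1. Then (1.5·√ρ + 2/√ρ + √ρ + A/√ρ) / (2·√2 + 2·√A) ≤ 1.203. -/
import Mathlib

set_option maxHeartbeats 1000000 in
private lemma sibling_key (s t : ℝ) (hs0 : 0 < s) (ht0 : 0 < t)
    (h1 : 1 ≤ s^2) (h2 : s^2 ≤ 2) (h3 : 1/2 ≤ t^2) (h4 : s^2 - 1 ≤ t^2)
    (h5 : t^2 ≤ 3*s^2 - 1) :
    2.5 * s^2 + 2 + t^2 ≤ 2.406 * 1.41421 * s + 2.406 * s * t := by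
  have hs1 : (1:ℝ) ≤ s := by nlinarith
  have hsq : s ≤ 1.41422 := by nlinarith
  have htp : (0.7071:ℝ) ≤ t := by nlinarith
  have htu : t ≤ 2.23607 := by nlinarith
  have a1 : (0:ℝ) ≤ s - 1 := by linarith
  have a2 : (0:ℝ) ≤ t - 0.7071 := by linarith
  have a3 : (0:ℝ) ≤ 1.41422 - s := by linarith
  have a4 : (0:ℝ) ≤ 2.23607 - t := by linarith
  have b2 : (0:ℝ) ≤ t^2 + 1 - s^2 := by linarith
  have b1 : (0:ℝ) ≤ t^2 - 1/2 := by linarith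
  have b5 : (0:ℝ) ≤ 3*s^2 - 1 - t^2 := by linarith
  nlinarith [mul_nonneg (mul_nonneg a1 a2) a3,
    mul_nonneg (mul_nonneg a1 a3) a3,
    mul_nonneg a1 (sq_nonneg (s - t/4 - (1.22474 - 0.70711/4))),
    mul_nonneg (mul_nonneg b2 a1) a3,
    mul_nonneg (mul_nonneg b5 a2) a3,
    mul_nonneg a2 (sq_nonneg (2.23607 - t)),
    mul_nonneg (mul_nonneg b5 a2) a4,
    mul_nonneg a3 (sq_nonneg (s + 1.5*t - (1.22474 + 1.5*0.70711))),
    mul_nonneg b2 (sq_nonneg (s + t/2 - (1.22474 + 0.70711/2))),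
    mul_nonneg b2 (sq_nonneg (2.23607 - t)),
    mul_nonneg b1 (sq_nonneg (s + t/4 - (1.22474 + 0.70711/4))),
    mul_nonneg a2 (sq_nonneg (s - t/2 - (1.22474 - 0.70711/2))),
    mul_nonneg (mul_nonneg b2 a1) a4,
    mul_nonneg b2 b5,
    mul_nonneg (mul_nonneg b1 a3) a4]

theorem simple_sibling_top_bound_rho_le_two
    (ρ A : ℝ) (hρ1 : 1 ≤ ρ) (hρ2 : ρ ≤ 2)
    (hA1 : max 0.5 (ρ - 1) ≤ A) (hA2 : A ≤ 3 * ρ - 1) :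
    (1.5 * Real.sqrt ρ + 2 / Real.sqrt ρ + Real.sqrt ρ + A / Real.sqrt ρ)
      / (2 * Real.sqrt 2 + 2 * Real.sqrt A) ≤ 1.203 := by
  have hA05 : (0.5:ℝ) ≤ A := le_trans (le_max_left _ _) hA1
  have hAρ : ρ - 1 ≤ A := le_trans (le_max_right _ _) hA1
  set s := Real.sqrt ρ with hs
  set t := Real.sqrt A with ht
  set r := Real.sqrt 2 with hr
  have hs0 : 0 < s := Real.sqrt_pos.mpr (by linarith)
  have ht0 : 0 < t := Real.sqrt_pos.mpr (by linarith)
  have hr0 : 0 < r := Real.sqrt_pos.mpr (by norm_num)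
  have hs2 : s^2 = ρ := Real.sq_sqrt (by linarith)
  have ht2 : t^2 = A := Real.sq_sqrt (by linarith)
  have hr2 : r^2 = 2 := Real.sq_sqrt (by norm_num)
  have hrc : (1.41421:ℝ) ≤ r := by nlinarith
  have hden : 0 < 2 * r + 2 * t := by linarith
  have key : 2.5 * s^2 + 2 + t^2 ≤ 2.406 * s * r + 2.406 * s * t := by
    have h := sibling_key s t hs0 ht0 (by rw [hs2]; exact hρ1) (by rw [hs2]; exact hρ2)
      (by rw [ht2]; linarith) (by rw [hs2, ht2]; linarith) (by rw [hs2, ht2]; linarith)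
    nlinarith [mul_pos hs0 hr0]
  rw [div_le_iff₀ hden]
  have heq : 1.5 * s + 2 / s + s + A / s = (2.5 * s^2 + 2 + t^2) / s := by
    rw [← ht2]; field_simp; ring
  rw [heq, div_le_iff₀ hs0]
  nlinarith [key]
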